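/- Dirac's theorem: if G is a finite simple graph with p ≥ 3 vertices and every vertex has degree at least p/2, then G is Hamiltonian (contains a cycle passing through every vertex). -/

import Mathlib

open List

namespace DiracAux

set_option linter.unusedSectionVars false

variable {V : Type*} [DecidableEq V] (G : SimpleGraph V) [DecidableRel G.Adj]

/-- number of adjacent consecutive pairs in a list -/
def pc : List V → ℕ
  | [] => 0
  | [_] => 0
  | a :: b :: r => (if G.Adj a b then 1 else 0) + pc (b :: r)

variable {G}

lemma pc_single (a : V) : pc G [a] = 0 := rfl

lemma pc_cons_cons (a b : V) (r : List V) :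
    pc G (a :: b :: r) = (if G.Adj a b then 1 else 0) + pc G (b :: r) := rfl

lemma pc_le : ∀ (a : V) (l : List V), pc G (a :: l) ≤ l.length
  | _, [] => le_refl 0
  | a, b :: r => by
      rw [pc_cons_cons]
      have := pc_le b r
      simp only [length_cons]
      split <;> omega

lemma pc_append : ∀ (s : List V) (a : V) (r : List V),
    pc G (s ++ (a :: r)) = pc G (s ++ [a]) + pc G (a :: r)
  | [], a, r => by simp [pc_single]
  | [x], a, r => by simp [pc_cons_cons, pc_single]
  | x :: y :: s, a, r => by
      have := pc_append (y :: s) a r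
      simp only [cons_append, pc_cons_cons] at this ⊢
      omega

lemma pc_reverse : ∀ (l : List V), pc G l.reverse = pc G l
  | [] => rfl
  | [_] => rfl
  | x :: y :: r => by
      have h1 : (x :: y :: r).reverse = (y :: r).reverse ++ [x] := by simp
      have h2 : (y :: r).reverse = r.reverse ++ [y] := by simp
      rw [h1, h2, append_assoc]
      simp only [singleton_append]
      have h3 := pc_append (G := G) r.reverse y [x]
      rw [h3, ← h2, pc_reverse (y :: r), pc_cons_cons y x, pc_single, pc_cons_cons x y,
        if_congr (G.adj_comm y x) rfl rfl]
      split <;> omega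

/-- cyclic adjacency count of the arrangement `v :: t` -/
def cw (G : SimpleGraph V) [DecidableRel G.Adj] (v : V) (t : List V) : ℕ :=
  pc G (v :: (t ++ [v]))

lemma cw_le (v : V) (t : List V) : cw G v t ≤ t.length + 1 := by
  simpa [cw] using pc_le v (t ++ [v])

lemma cw_rot1 (v w : V) (t : List V) : cw G w (v :: t) = cw G v (t ++ [w]) := by
  unfold cw
  have h := pc_append (G := G) (v :: t) w [v]
  simp only [cons_append, singleton_append] at h ⊢
  rw [append_assoc]
  simp only [singleton_append]
  rw [h, pc_cons_cons, pc_cons_cons, pc_single]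
  split <;> omega

lemma cw_rot : ∀ (s : List V) (v b : V) (r : List V),
    cw G v (s ++ b :: r) = cw G b (r ++ v :: s)
  | [], v, b, r => by
      have := cw_rot1 (G := G) b v r
      simpa using this
  | c :: s, v, b, r => by
      have h1 := cw_rot1 (G := G) c v (s ++ b :: r)
      simp only [cons_append] at h1 ⊢
      rw [h1, show (s ++ b :: r) ++ [v] = s ++ b :: (r ++ [v]) by simp,
        cw_rot s c b (r ++ [v])]
      congr 1
      simp

lemma exists_bad : ∀ (a : V) (l : List V), pc G (a :: l) < l.length →
    ∃ s x y r, a :: l = s ++ x :: y :: r ∧ ¬ G.Adj x y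
  | a, [], h => by simp at h
  | a, b :: r, h => by
      by_cases hab : G.Adj a b
      · have h' : pc G (b :: r) < r.length := by
          rw [pc_cons_cons, if_pos hab] at h
          simp only [length_cons] at h
          omega
        obtain ⟨s, x, y, r', he, hxy⟩ := exists_bad b r h'
        exact ⟨a :: s, x, y, r', by rw [cons_append, ← he], hxy⟩
      · exact ⟨[], a, b, r, rfl, hab⟩

lemma chain_of_pc : ∀ (a : V) (l : List V), l.length ≤ pc G (a :: l) → List.Chain G.Adj a l
  | _, [], _ => .nil
  | a, b :: r, h => by
      have hle := pc_le (G := G) b r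
      rw [pc_cons_cons] at h
      simp only [length_cons] at h
      have hab : G.Adj a b := by
        by_contra hn
        rw [if_neg hn] at h
        omega
      exact List.Chain.cons hab (chain_of_pc b r (by rw [if_pos hab] at h; omega))

lemma surgery (v a b u : V) (s₁ s₂ : List V) (huv : ¬ G.Adj u v) (hua : G.Adj u a)
    (hvb : G.Adj v b) (hlast : (b :: s₂).getLast (by simp) = u) :
    cw G v (s₁ ++ a :: b :: s₂) + 1 ≤ cw G v (s₁ ++ a :: (b :: s₂).reverse) := by
  set Z := (b :: s₂).dropLast with hZ
  have hbs : b :: s₂ = Z ++ [u] := by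
    rw [hZ, ← hlast]
    exact (dropLast_append_getLast (by simp)).symm
  have hrev1 : (b :: s₂).reverse = u :: Z.reverse := by rw [hbs]; simp
  have hrev2 : (b :: s₂).reverse = s₂.reverse ++ [b] := by simp
  -- old value
  have hold : cw G v (s₁ ++ a :: b :: s₂)
      = pc G (v :: s₁ ++ [a]) + ((if G.Adj a b then 1 else 0) + pc G (b :: s₂)) := by
    unfold cw
    rw [show v :: ((s₁ ++ a :: b :: s₂) ++ [v]) = (v :: s₁) ++ (a :: (b :: s₂ ++ [v])) by simp,
      pc_append (G := G) (v :: s₁) a (b :: s₂ ++ [v])]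
    congr 1
    rw [show a :: (b :: s₂ ++ [v]) = a :: b :: (s₂ ++ [v]) by simp, pc_cons_cons]
    congr 1
    rw [show b :: (s₂ ++ [v]) = (b :: s₂) ++ [v] by simp, hbs, append_assoc]
    simp only [singleton_append]
    rw [pc_append (G := G) Z u [v], pc_cons_cons, pc_single, if_neg huv]
    omega
  -- new value
  have hnew : cw G v (s₁ ++ a :: (b :: s₂).reverse)
      = pc G (v :: s₁ ++ [a]) + (1 + (pc G (b :: s₂) + 1)) := by
    unfold cw
    rw [show v :: ((s₁ ++ a :: (b :: s₂).reverse) ++ [v])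
        = (v :: s₁) ++ (a :: ((b :: s₂).reverse ++ [v])) by simp,
      pc_append (G := G) (v :: s₁) a ((b :: s₂).reverse ++ [v])]
    congr 1
    rw [hrev1]
    rw [show a :: ((u :: Z.reverse) ++ [v]) = a :: u :: (Z.reverse ++ [v]) by simp, pc_cons_cons,
      if_pos (G.adj_symm hua)]
    congr 1
    rw [show u :: (Z.reverse ++ [v]) = (u :: Z.reverse) ++ [v] by simp, ← hrev1, hrev2,
      append_assoc]
    simp only [singleton_append]
    rw [pc_append (G := G) s₂.reverse b [v], pc_cons_cons, pc_single,
      if_pos (G.adj_symm hvb), ← hrev2, pc_reverse]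
  rw [hold, hnew]
  split <;> omega

/-- Build a walk from a chain of adjacencies. -/
def mkWalk (G : SimpleGraph V) [DecidableRel G.Adj] : (a : V) → (l : List V) → (b : V) → List.Chain G.Adj a (l ++ [b]) → G.Walk a b
  | _, [], _, h => SimpleGraph.Walk.cons (List.chain_cons.mp h).1 SimpleGraph.Walk.nil
  | _, c :: l, b, h =>
      SimpleGraph.Walk.cons (List.chain_cons.mp h).1 (mkWalk G c l b (List.chain_cons.mp h).2)

lemma mkWalk_support : ∀ (a : V) (l : List V) (b : V) (h : List.Chain G.Adj a (l ++ [b])),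
    (mkWalk G a l b h).support = a :: (l ++ [b])
  | _, [], _, _ => rfl
  | a, c :: l, b, h => by
      simp only [mkWalk, SimpleGraph.Walk.support_cons, mkWalk_support c l b, cons_append]
      exact congrArg (a :: ·) (mkWalk_support c l b _)

lemma mkWalk_edge_mem : ∀ (a : V) (l : List V) (b : V) (h : List.Chain G.Adj a (l ++ [b]))
    (x y : V), x ∉ a :: l → s(x, y) ∈ (mkWalk G a l b h).edges →
    y = (a :: l).getLast (cons_ne_nil a l) ∧ x = b
  | a, [], b, h, x, y, hx, hmem => by
      simp only [mkWalk, SimpleGraph.Walk.edges_cons, SimpleGraph.Walk.edges_nil,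
        mem_singleton] at hmem
      rw [Sym2.eq_iff] at hmem
      rcases hmem with ⟨rfl, rfl⟩ | ⟨rfl, rfl⟩
      · exact absurd (mem_singleton_self x) hx
      · simp
  | a, c :: l, b, h, x, y, hx, hmem => by
      simp only [mkWalk, SimpleGraph.Walk.edges_cons, mem_cons] at hmem
      rcases hmem with hmem | hmem
      · rw [Sym2.eq_iff] at hmem
        rcases hmem with ⟨rfl, rfl⟩ | ⟨rfl, rfl⟩
        · exact absurd mem_cons_self hx
        · exact absurd (mem_cons_of_mem _ mem_cons_self) hx
      · have hx' : x ∉ c :: l := fun hc => hx (mem_cons_of_mem _ hc)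
        obtain ⟨h1, h2⟩ := mkWalk_edge_mem c l b (List.chain_cons.mp h).2 x y hx' hmem
        refine ⟨?_, h2⟩
        rw [h1, List.getLast_cons (cons_ne_nil c l)]

variable [Fintype V]

lemma hamiltonian_of_arrangement (v : V) (t : List V)
    (hperm : (v :: t).Perm Finset.univ.toList) (h3 : 3 ≤ Fintype.card V)
    (hcw : cw G v t = Fintype.card V) :
    ∃ a, ∃ w : G.Walk a a, w.IsHamiltonianCycle := by
  have hnd : (v :: t).Nodup := hperm.nodup_iff.mpr (Finset.nodup_toList _)
  have hmem : ∀ x : V, x ∈ v :: t := fun x =>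
    hperm.mem_iff.mpr (by simp [Finset.mem_toList])
  have hlen : (v :: t).length = Fintype.card V := by
    rw [hperm.length_eq, Finset.length_toList, Finset.card_univ]
  have htlen : 2 ≤ t.length := by simp only [length_cons] at hlen; omega
  obtain ⟨c, rest, rfl⟩ : ∃ c rest, t = c :: rest := by
    cases t with
    | nil => simp at htlen
    | cons c rest => exact ⟨c, rest, rfl⟩
  have hrest : rest ≠ [] := by
    intro hr
    rw [hr] at htlen
    simp at htlen
  have hchain : List.Chain G.Adj v ((c :: rest) ++ [v]) := by
    apply chain_of_pc
    have : ((c :: rest) ++ [v]).length = Fintype.card V := by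
      simp only [length_cons] at hlen ⊢
      simp
      omega
    rw [this]
    exact le_of_eq hcw.symm
  rw [cons_append] at hchain
  replace hchain := List.chain_cons.mp hchain
  obtain ⟨hvc, hchain2⟩ := hchain
  set q : G.Walk c v := mkWalk G c rest v hchain2 with hq
  have hqsupp : q.support = c :: (rest ++ [v]) := mkWalk_support c rest v hchain2
  have hps : (c :: (rest ++ [v])).Perm (v :: c :: rest) := by
    have : c :: (rest ++ [v]) = (c :: rest) ++ [v] := by simp
    rw [this]
    exact perm_append_singleton v (c :: rest)
  have hqnodup : q.support.Nodup := by
    rw [hqsupp]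
    exact hps.nodup_iff.mpr hnd
  have qpath : q.IsPath := SimpleGraph.Walk.IsPath.mk' hqnodup
  have hedge : s(v, c) ∉ q.edges := by
    intro hmem'
    have hvnot : v ∉ c :: rest := fun hv => (nodup_cons.mp hnd).1 hv
    obtain ⟨h1, _⟩ := mkWalk_edge_mem c rest v hchain2 v c hvnot hmem'
    rw [List.getLast_cons hrest] at h1
    exact (nodup_cons.mp (nodup_cons.mp hnd).2).1 (h1 ▸ getLast_mem hrest)
  have hcyc : (SimpleGraph.Walk.cons hvc q).IsCycle :=
    SimpleGraph.Path.cons_isCycle ⟨q, qpath⟩ hvc hedge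
  refine ⟨v, SimpleGraph.Walk.cons hvc q, ?_⟩
  rw [SimpleGraph.Walk.isHamiltonianCycle_isCycle_and_isHamiltonian_tail]
  refine ⟨hcyc, ?_⟩
  intro x
  have hnil : ¬ (SimpleGraph.Walk.cons hvc q).Nil := hcyc.not_nil
  rw [SimpleGraph.Walk.support_tail_of_not_nil _ hnil, SimpleGraph.Walk.support_cons, List.tail_cons, hqsupp]
  rw [hps.count_eq]
  exact List.count_eq_one_of_mem hnd (hmem x)

lemma improve2 (hdeg : ∀ x : V, Fintype.card V ≤ 2 * G.degree x) (v : V) (t : List V)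
    (hperm : (v :: t).Perm Finset.univ.toList) (h3 : 3 ≤ Fintype.card V)
    (ht0 : t ≠ []) (hbad : ¬ G.Adj (t.getLast ht0) v) :
    ∃ t', (v :: t').Perm Finset.univ.toList ∧ cw G v t + 1 ≤ cw G v t' := by
  set p := Fintype.card V with hp
  set m := t.length with hm
  set u := t.getLast ht0 with hu
  have hnd : (v :: t).Nodup := hperm.nodup_iff.mpr (Finset.nodup_toList _)
  have hndt : t.Nodup := (nodup_cons.mp hnd).2
  have hvt : v ∉ t := (nodup_cons.mp hnd).1
  have hmem : ∀ x : V, x ∈ v :: t := fun x =>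
    hperm.mem_iff.mpr (by simp [Finset.mem_toList])
  have hlen : m + 1 = p := by
    have := hperm.length_eq
    rw [Finset.length_toList, Finset.card_univ] at this
    simpa using this
  have hm2 : 2 ≤ m := by omega
  have hmlt : m - 1 < m := by omega
  have hue : u = t[m - 1]'(hmlt) := by
    rw [hu, List.getLast_eq_getElem]
  -- the two index sets
  set B : Finset ℕ := (Finset.range m).filter (fun s => G.Adj v (t.getD s v)) with hB
  set A : Finset ℕ := (Finset.range m).filter
      (fun s => 1 ≤ s ∧ G.Adj u (t.getD (s - 1) v)) with hA
  have hBcard : B.card = G.degree v := by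
    rw [← SimpleGraph.card_neighborFinset_eq_degree]
    apply Finset.card_bij (fun s _ => t.getD s v)
    · intro s hs
      rw [hB, Finset.mem_filter] at hs
      rw [SimpleGraph.mem_neighborFinset]
      exact hs.2
    · intro s1 h1 s2 h2 heq
      rw [hB, Finset.mem_filter, Finset.mem_range] at h1 h2
      rw [List.getD_eq_getElem t v h1.1, List.getD_eq_getElem t v h2.1] at heq
      exact (hndt.getElem_inj_iff).mp heq
    · intro w hw
      rw [SimpleGraph.mem_neighborFinset] at hw
      have hwv : w ≠ v := fun h => G.irrefl (h ▸ hw)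
      have hwt : w ∈ t := by
        rcases mem_cons.mp (hmem w) with h | h
        · exact absurd h hwv
        · exact h
      obtain ⟨i, hi, hie⟩ := List.mem_iff_getElem.mp hwt
      refine ⟨i, ?_, ?_⟩
      · rw [hB, Finset.mem_filter, Finset.mem_range]
        refine ⟨hi, ?_⟩
        rw [List.getD_eq_getElem t v hi, hie]
        exact hw
      · rw [List.getD_eq_getElem t v hi, hie]
  have hAcard : A.card = G.degree u := by
    rw [← SimpleGraph.card_neighborFinset_eq_degree]
    apply Finset.card_bij (fun s _ => t.getD (s - 1) v)
    · intro s hs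
      rw [hA, Finset.mem_filter] at hs
      rw [SimpleGraph.mem_neighborFinset]
      exact hs.2.2
    · intro s1 h1 s2 h2 heq
      rw [hA, Finset.mem_filter, Finset.mem_range] at h1 h2
      have hl1 : s1 - 1 < m := by omega
      have hl2 : s2 - 1 < m := by omega
      rw [List.getD_eq_getElem t v hl1, List.getD_eq_getElem t v hl2] at heq
      have := (hndt.getElem_inj_iff).mp heq
      omega
    · intro w hw
      rw [SimpleGraph.mem_neighborFinset] at hw
      have hwu : w ≠ u := fun h => G.irrefl (h ▸ hw)
      have hwv : w ≠ v := by
        intro h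
        exact hbad (h ▸ hw)
      have hwt : w ∈ t := by
        rcases mem_cons.mp (hmem w) with h | h
        · exact absurd h hwv
        · exact h
      obtain ⟨i, hi, hie⟩ := List.mem_iff_getElem.mp hwt
      have hine : i ≠ m - 1 := by
        intro h
        apply hwu
        rw [← hie, hue]
        congr 1
      refine ⟨i + 1, ?_, ?_⟩
      · rw [hA, Finset.mem_filter, Finset.mem_range]
        refine ⟨by omega, by omega, ?_⟩
        have : i + 1 - 1 = i := by omega
        rw [this, List.getD_eq_getElem t v hi, hie]
        exact hw
      · have : i + 1 - 1 = i := by omega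
        rw [this, List.getD_eq_getElem t v hi, hie]
  have hAB : p ≤ A.card + B.card := by
    have h1 := hdeg u
    have h2 := hdeg v
    rw [hAcard, hBcard]
    omega
  have hABsub : A ∪ B ⊆ Finset.range m :=
    Finset.union_subset (Finset.filter_subset _ _) (Finset.filter_subset _ _)
  have hABlt : (A ∪ B).card ≤ m := by
    calc (A ∪ B).card ≤ (Finset.range m).card := Finset.card_le_card hABsub
    _ = m := Finset.card_range m
  have hinter : (A ∩ B).Nonempty := by
    rw [← Finset.card_pos]
    have := Finset.card_union_add_card_inter A B
    omega
  obtain ⟨s, hs⟩ := hinter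
  rw [Finset.mem_inter, hA, hB, Finset.mem_filter, Finset.mem_filter, Finset.mem_range] at hs
  obtain ⟨⟨hsm, hs1, hadjU⟩, _, hadjV⟩ := hs
  set j := s - 1 with hj
  have hjm : j + 1 < m := by omega
  have hjm' : j < m := by omega
  set a := t[j]'hjm' with ha
  set b := t[j + 1]'hjm with hb2
  have hua2 : G.Adj u a := by
    rwa [List.getD_eq_getElem t v hjm'] at hadjU
  have hvb2 : G.Adj v b := by
    have : s = j + 1 := by omega
    rwa [this, List.getD_eq_getElem t v hjm] at hadjV
  have e1 : t.drop j = a :: t.drop (j + 1) := List.drop_eq_getElem_cons hjm'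
  have e2 : t.drop (j + 1) = b :: t.drop (j + 2) := List.drop_eq_getElem_cons hjm
  have hdecomp : t = t.take j ++ a :: b :: t.drop (j + 2) := by
    conv_lhs => rw [← List.take_append_drop j t]
    rw [e1, e2]
  set S₁ := t.take j with hS₁
  set S₂ := t.drop (j + 2) with hS₂
  have hlast2 : (b :: S₂).getLast (cons_ne_nil b S₂) = u := by
    have h1 : t.drop (j + 1) ≠ [] := by rw [e2]; exact cons_ne_nil _ _
    have h2 : (t.drop (j + 1)).getLast h1 = u := by
      rw [List.getLast_drop]
    rw [← h2]
    congr 1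
    exact e2.symm
  have hsur := surgery (G := G) v a b u S₁ S₂ hbad hua2 hvb2 hlast2
  refine ⟨S₁ ++ a :: (b :: S₂).reverse, ?_, ?_⟩
  · refine List.Perm.trans ?_ hperm
    refine List.Perm.cons v ?_
    conv_rhs => rw [hdecomp]
    exact ((reverse_perm (b :: S₂)).cons a).append_left S₁
  · calc cw G v t + 1 = cw G v (S₁ ++ a :: b :: S₂) + 1 := by rw [← hdecomp]
    _ ≤ cw G v (S₁ ++ a :: (b :: S₂).reverse) := hsur

lemma perm_rot (s : List V) (v b : V) (r : List V) :
    (b :: (r ++ v :: s)).Perm (v :: (s ++ b :: r)) := by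
  calc b :: (r ++ v :: s) ~ b :: (v :: (r ++ s)) := (List.perm_middle).cons b
  _ ~ v :: b :: (r ++ s) := List.Perm.swap v b _
  _ ~ v :: b :: (s ++ r) := (List.perm_append_comm.cons b).cons v
  _ ~ v :: (s ++ b :: r) := (List.perm_middle.symm).cons v

lemma improve (hdeg : ∀ x : V, Fintype.card V ≤ 2 * G.degree x) (h3 : 3 ≤ Fintype.card V)
    (v : V) (t : List V) (hperm : (v :: t).Perm Finset.univ.toList)
    (hlt : cw G v t < Fintype.card V) :
    ∃ v' t', (v' :: t').Perm Finset.univ.toList ∧ cw G v t < cw G v' t' := by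
  set p := Fintype.card V with hp
  have hlen : t.length + 1 = p := by
    have := hperm.length_eq
    rw [Finset.length_toList, Finset.card_univ] at this
    simpa using this
  have hbadex : ∃ s x y r, v :: (t ++ [v]) = s ++ x :: y :: r ∧ ¬ G.Adj x y := by
    apply exists_bad
    have : (t ++ [v]).length = p := by simp; omega
    rw [this]
    exact hlt
  obtain ⟨s, x, y, r, heq, hxy⟩ := hbadex
  cases s with
  | nil =>
      simp only [nil_append, cons.injEq] at heq
      obtain ⟨rfl, heq2⟩ := heq
      cases t with
      | nil => simp only [List.length_nil] at hlen; omega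
      | cons c t₂ =>
          simp only [cons_append, cons.injEq] at heq2
          obtain ⟨rfl, heq3⟩ := heq2
          have hrot : cw G v (c :: t₂) = cw G c (t₂ ++ [v]) := by
            have := cw_rot (G := G) [] v c t₂
            simpa using this
          have hperm' : (c :: (t₂ ++ [v])).Perm Finset.univ.toList := by
            refine List.Perm.trans ?_ hperm
            have : c :: (t₂ ++ [v]) = (c :: t₂) ++ [v] := by simp
            rw [this]
            exact perm_append_singleton v (c :: t₂)
          have ht0 : t₂ ++ [v] ≠ [] := by simp
          have hlast : (t₂ ++ [v]).getLast ht0 = v := by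
            simp
          obtain ⟨t', hp', hcw'⟩ := improve2 (G := G) hdeg c (t₂ ++ [v]) hperm' h3 ht0
            (by rw [hlast]; exact hxy)
          exact ⟨c, t', hp', by omega⟩
  | cons w s' =>
      simp only [cons_append, cons.injEq] at heq
      obtain ⟨rfl, heq2⟩ := heq
      rcases r.eq_nil_or_concat with rfl | ⟨r', w', rfl⟩
      · -- bad pair at the end : t ++ [v] = s' ++ [x, y]
        have heq3 : t ++ [v] = (s' ++ [x]) ++ [y] := by
          rw [heq2]; simp
        obtain ⟨ht, hy⟩ := List.append_inj' heq3 rfl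
        have hyv : y = v := by simpa using hy.symm
        have ht0 : t ≠ [] := by
          intro h
          rw [h] at hlen
          simp only [List.length_nil] at hlen
          omega
        have hlast : t.getLast ht0 = x := by
          have : t.getLast ht0 = (s' ++ [x]).getLast (by simp) := by
            congr 1
          rw [this, List.getLast_append_of_ne_nil] <;> simp
        obtain ⟨t', hp', hcw'⟩ := improve2 (G := G) hdeg v t hperm h3 ht0
          (by rw [hlast, ← hyv]; exact hxy)
        exact ⟨v, t', hp', by omega⟩
      · -- bad pair in the middle
        have heq3 : (v :: t) ++ [v] = (v :: s' ++ x :: y :: r') ++ [w'] := by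
          simp only [cons_append, heq2, List.concat_eq_append]
          simp
        obtain ⟨ht, hw'⟩ := List.append_inj' heq3 rfl
        have ht2 : t = s' ++ x :: y :: r' := by simpa using ht
        have ht3 : t = (s' ++ [x]) ++ y :: r' := by rw [ht2]; simp
        have hrot : cw G v t = cw G y (r' ++ v :: (s' ++ [x])) := by
          rw [ht3]
          exact cw_rot (s' ++ [x]) v y r'
        have hperm' : (y :: (r' ++ v :: (s' ++ [x]))).Perm Finset.univ.toList := by
          refine List.Perm.trans ?_ hperm
          refine List.Perm.trans (perm_rot (s' ++ [x]) v y r') ?_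
          rw [← ht3]
        have ht0 : r' ++ v :: (s' ++ [x]) ≠ [] := by simp
        have hlast : (r' ++ v :: (s' ++ [x])).getLast ht0 = x := by
          have h1 : r' ++ v :: (s' ++ [x]) = (r' ++ v :: s') ++ [x] := by simp
          have : (r' ++ v :: (s' ++ [x])).getLast ht0
              = ((r' ++ v :: s') ++ [x]).getLast (by simp) := by congr 1
          rw [this, List.getLast_append_of_ne_nil] <;> simp
        obtain ⟨t', hp', hcw'⟩ := improve2 (G := G) hdeg y (r' ++ v :: (s' ++ [x])) hperm' h3 ht0
          (by rw [hlast]; exact hxy)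
        exact ⟨y, t', hp', by omega⟩

lemma reach (hdeg : ∀ x : V, Fintype.card V ≤ 2 * G.degree x) (h3 : 3 ≤ Fintype.card V) :
    ∀ (n : ℕ) (v : V) (t : List V), (v :: t).Perm Finset.univ.toList →
      Fintype.card V ≤ cw G v t + n →
      ∃ v' t', (v' :: t').Perm Finset.univ.toList ∧ cw G v' t' = Fintype.card V := by
  intro n
  induction n with
  | zero =>
      intro v t hperm hle
      refine ⟨v, t, hperm, le_antisymm ?_ (by omega)⟩
      have : t.length + 1 = Fintype.card V := by
        have := hperm.length_eq
        rw [Finset.length_toList, Finset.card_univ] at this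
        simpa using this
      have := cw_le (G := G) v t
      omega
  | succ n ih =>
      intro v t hperm hle
      by_cases h : cw G v t < Fintype.card V
      · obtain ⟨v', t', hp', hcw'⟩ := improve (G := G) hdeg h3 v t hperm h
        exact ih v' t' hp' (by omega)
      · refine ⟨v, t, hperm, le_antisymm ?_ (by omega)⟩
        have : t.length + 1 = Fintype.card V := by
          have := hperm.length_eq
          rw [Finset.length_toList, Finset.card_univ] at this
          simpa using this
        have := cw_le (G := G) v t
        omega

end DiracAux

/-- Dirac's theorem: a finite simple graph on `p ≥ 3` vertices in
which every vertex has degree at least `p/2` is Hamiltonian. -/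
theorem dirac_hamiltonian {V : Type*} [Fintype V] [DecidableEq V]
    (G : SimpleGraph V) [DecidableRel G.Adj] (hp : 3 ≤ Fintype.card V)
    (hdeg : ∀ x : V, Fintype.card V ≤ 2 * G.degree x) :
    G.IsHamiltonian := by
  intro _
  have hne : (Finset.univ.toList (α := V)) ≠ [] := by
    intro h
    have := Finset.length_toList (Finset.univ : Finset V)
    rw [h] at this
    simp only [List.length_nil] at this
    rw [Finset.card_univ] at this
    omega
  obtain ⟨v₀, t₀, h0⟩ := List.exists_cons_of_ne_nil hne
  have hperm0 : (v₀ :: t₀).Perm Finset.univ.toList := by rw [h0]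
  obtain ⟨v, t, hperm, hcw⟩ := DiracAux.reach (G := G) hdeg hp (Fintype.card V) v₀ t₀ hperm0
    (by omega)
  exact DiracAux.hamiltonian_of_arrangement (G := G) v t hperm hp hcw
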